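/- With Γ and Γ̂ as the graph surface z = ax + by + c over a bounded domain D and its image under the diagonal scaling by Λ^{-1/2}, Λ = diag(λ_min, λ_mid, λ_max), 0 < λ_min ≤ λ_mid ≤ λ_max, the area ratio is bounded: |Γ|/|Γ̂| ≤ λ_mid^{1/2} λ_max^{1/2}. -/

import Mathlib

open MeasureTheory

/-- With `Γ`, `Γ̂` as the graph surface `z = ax+by+c` over `D` and its image
under the diagonal scaling by `Λ^{-1/2}`: the area ratio is bounded by
`(x,y,z) ↦ (x/√λmin, y/√λmid, z/√λmax)`, so that (per the surface-area formula)
`|Γ| = √(1+a²+b²)·|D|` and `|Γ̂| = √(1 + a²λmin/λmax + b²λmid/λmax)·|D̂|` with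
`|D̂| = |D|/(√λmin·√λmid)`. Then
`|Γ|/|Γ̂| ≤ √λmid · √λmax`. -/
theorem stmt11 (D : Set (ℝ × ℝ)) (hD : MeasurableSet D)
    (hDpos : 0 < volume D) (hDfin : volume D < ⊤)
    (a b c : ℝ)
    (lmin lmid lmax : ℝ) (hmin : 0 < lmin) (h1 : lmin ≤ lmid) (h2 : lmid ≤ lmax)
    (areaΓ areaΓhat areaDhat : ℝ)
    (hΓ : areaΓ = Real.sqrt (1 + a ^ 2 + b ^ 2) * (volume D).toReal)
    (hDhat : areaDhat = (volume D).toReal / (Real.sqrt lmin * Real.sqrt lmid))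
    (hΓhat : areaΓhat =
      Real.sqrt (1 + a ^ 2 * (lmin / lmax) + b ^ 2 * (lmid / lmax)) * areaDhat) :
    areaΓ / areaΓhat ≤ Real.sqrt lmid * Real.sqrt lmax := by
  have hmid : 0 < lmid := lt_of_lt_of_le hmin h1
  have hmax : 0 < lmax := lt_of_lt_of_le hmid h2
  have hV : 0 < (volume D).toReal := ENNReal.toReal_pos hDpos.ne' hDfin.ne
  have hsmin : 0 < Real.sqrt lmin := Real.sqrt_pos.mpr hmin
  have hsmid : 0 < Real.sqrt lmid := Real.sqrt_pos.mpr hmid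
  have hsmax : 0 < Real.sqrt lmax := Real.sqrt_pos.mpr hmax
  have hTarg : 0 < 1 + a ^ 2 * (lmin / lmax) + b ^ 2 * (lmid / lmax) := by positivity
  have hT : 0 < Real.sqrt (1 + a ^ 2 * (lmin / lmax) + b ^ 2 * (lmid / lmax)) :=
    Real.sqrt_pos.mpr hTarg
  have hden : 0 < areaΓhat := by
    rw [hΓhat, hDhat]; positivity
  rw [div_le_iff₀ hden, hΓ, hΓhat, hDhat]
  have key : Real.sqrt lmin * Real.sqrt (1 + a ^ 2 + b ^ 2) ≤
      Real.sqrt lmax * Real.sqrt (1 + a ^ 2 * (lmin / lmax) + b ^ 2 * (lmid / lmax)) := by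
    rw [← Real.sqrt_mul hmin.le, ← Real.sqrt_mul hmax.le]
    apply Real.sqrt_le_sqrt
    have h : lmax * (1 + a ^ 2 * (lmin / lmax) + b ^ 2 * (lmid / lmax)) =
        lmax + a ^ 2 * lmin + b ^ 2 * lmid := by
      field_simp
    rw [h]
    nlinarith [sq_nonneg a, sq_nonneg b]
  have expand : Real.sqrt lmid * Real.sqrt lmax *
      (Real.sqrt (1 + a ^ 2 * (lmin / lmax) + b ^ 2 * (lmid / lmax)) *
        ((volume D).toReal / (Real.sqrt lmin * Real.sqrt lmid))) =
      (Real.sqrt lmax * Real.sqrt (1 + a ^ 2 * (lmin / lmax) + b ^ 2 * (lmid / lmax)))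
        / Real.sqrt lmin * (volume D).toReal := by
    field_simp
  rw [expand]
  have : Real.sqrt (1 + a ^ 2 + b ^ 2) ≤
      Real.sqrt lmax * Real.sqrt (1 + a ^ 2 * (lmin / lmax) + b ^ 2 * (lmid / lmax))
        / Real.sqrt lmin := by
    rw [le_div_iff₀ hsmin]
    nlinarith [key]
  exact mul_le_mul_of_nonneg_right this hV.le
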